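/- Let G be a flow graph with start vertex s and dominator tree D. If v is an ancestor of u in D (i.e., v dominates u), then every simple path in G from v to u contains only vertices that are descendants of v in D (i.e., vertices dominated by v). -/
import Mathlib


open scoped Classical

namespace Dominators

variable {V : Type*}

/-- A walk in a digraph `E` from `u` to `w`, recorded as the list of its vertices. -/
inductive Walk (E : V → V → Prop) : V → V → List V → Prop
  | nil (v : V) : Walk E v v [v]
  | cons {u v w : V} {p : List V} (h : E u v) (hw : Walk E v w p) : Walk E u w (u :: p)

/-- `v` is reachable from `s` in the flow graph `(E, s)`. -/
def Reachable (E : V → V → Prop) (s v : V) : Prop := ∃ p, Walk E s v p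

/-- `v` dominates `w` in the flow graph `(E, s)`: every walk from `s` to `w` contains `v`.
In the dominator tree `D`, `v` is an ancestor of `w` iff `v` dominates `w`. -/
def Dom (E : V → V → Prop) (s v w : V) : Prop := ∀ p, Walk E s w p → v ∈ p

/-- `v` is the immediate dominator of `w` (the parent of `w` in the dominator tree):
a proper dominator of `w` that is dominated by every proper dominator of `w`. -/
def IsIdom (E : V → V → Prop) (s v w : V) : Prop :=
  v ≠ w ∧ Dom E s v w ∧ ∀ u, u ≠ w → Dom E s u w → Dom E s u v

/-- `z` is the nearest common ancestor of `x` and `y` in the dominator tree of `(E, s)`. -/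
def IsNca (E : V → V → Prop) (s z x y : V) : Prop :=
  Dom E s z x ∧ Dom E s z y ∧ ∀ u, Dom E s u x → Dom E s u y → Dom E s u z

/-- The graph obtained from `E` by inserting the edge `(x, y)`. -/
def Ins (E : V → V → Prop) (x y : V) : V → V → Prop := fun a b => E a b ∨ (a = x ∧ b = y)

/-- `v` is affected by the insertion of edge `(x, y)`: its immediate dominator
(parent in the dominator tree) changes. -/
def Affected (E : V → V → Prop) (s x y v : V) : Prop :=
  ∃ a b, IsIdom E s a v ∧ IsIdom (Ins E x y) s b v ∧ a ≠ b

/-- `depth` is a depth function for the dominator tree of `(E, s)`. -/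
def IsDepth (E : V → V → Prop) (s : V) (depth : V → ℕ) : Prop :=
  depth s = 0 ∧ ∀ v u, Reachable E s v → v ≠ s → IsIdom E s u v → depth v = depth u + 1

/-- `δ` is a preorder of the dominator tree of `(E, s)`: it is injective on reachable
vertices, every vertex precedes (or equals) its descendants, and the descendants of every
vertex are consecutive. -/
def IsPreorderOfD (E : V → V → Prop) (s : V) (δ : V → ℕ) : Prop :=
  (∀ u v, Reachable E s u → Reachable E s v → u ≠ v → δ u ≠ δ v) ∧
  (∀ v u, Reachable E s u → Dom E s v u → δ v ≤ δ u) ∧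
  (∀ v a b, Reachable E s b → Dom E s v a → δ v ≤ δ b → δ b ≤ δ a → Dom E s v b)

/-- `δ` is a low-high order for the vertex `v` in `(E, s)`: either the edge from the
parent `d(v)` of `v` in the dominator tree is in `E`, or `v` has two entering edges
`(u, v)` and `(w, v)` with `u`, `w` reachable, `u <_δ v <_δ w`, and `w` not a
descendant of `v` in the dominator tree. -/
def LowHighFor (E : V → V → Prop) (s : V) (δ : V → ℕ) (v : V) : Prop :=
  (∃ q, IsIdom E s q v ∧ E q v) ∨
  ∃ u w, E u v ∧ E w v ∧ Reachable E s u ∧ Reachable E s w ∧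
    δ u < δ v ∧ δ v < δ w ∧ ¬ Dom E s v w

/-- `δ` is a low-high order of the flow graph `(E, s)`. -/
def IsLowHigh (E : V → V → Prop) (s : V) (δ : V → ℕ) : Prop :=
  IsPreorderOfD E s δ ∧ ∀ v, Reachable E s v → v ≠ s → LowHighFor E s δ v

/-- The edge relation of the spanning tree with parent function `par`, rooted at `s`,
on the vertices reachable in `(E, s)`. -/
def TreeRel (E : V → V → Prop) (s : V) (par : V → V) : V → V → Prop :=
  fun a b => Reachable E s b ∧ b ≠ s ∧ par b = a

/-- `par` is (the parent function of) a spanning tree of the flow graph `(E, s)`. -/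
def IsSpanningTree (E : V → V → Prop) (s : V) (par : V → V) : Prop :=
  (∀ v, Reachable E s v → v ≠ s → E (par v) v) ∧
  (∀ v, Reachable E s v → ∃ p, Walk (TreeRel E s par) s v p)

/-- The spanning trees with parent functions `b` and `r` are divergent: for every
reachable `v`, the tree paths from `s` to `v` share only the dominators of `v`. -/
def Divergent (E : V → V → Prop) (s : V) (b r : V → V) : Prop :=
  ∀ v p q, Reachable E s v → Walk (TreeRel E s b) s v p → Walk (TreeRel E s r) s v q →
    ∀ u, u ∈ p → u ∈ q → Dom E s u v

/-- If `v` is an ancestor of `u` in the dominator tree (i.e. `v` dominates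
`u`), then every simple path in `G` from `v` to `u` contains only vertices dominated
by `v`. -/
theorem walk_head' {E : V → V → Prop} {a b : V} {p : List V} (h : Walk E a b p) :
    ∃ t, p = a :: t := by
  cases h with
  | nil => exact ⟨[], rfl⟩
  | cons h hw => exact ⟨_, rfl⟩

theorem walk_append {E : V → V → Prop} {a b c : V} {p q : List V}
    (h : Walk E a b p) (h2 : Walk E b c q) : Walk E a c (p ++ q.tail) := by
  induction h with
  | nil v =>
    obtain ⟨t, rfl⟩ := walk_head' h2
    simpa using h2
  | cons h hw ih => exact Walk.cons h (ih h2)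

theorem walk_split {E : V → V → Prop} {a b w : V} {p : List V}
    (h : Walk E a b p) (hw : w ∈ p) :
    ∃ p1 p2, p = p1 ++ w :: p2 ∧ Walk E w b (w :: p2) := by
  induction h with
  | nil v =>
    rcases List.mem_singleton.mp hw with rfl
    exact ⟨[], [], rfl, Walk.nil w⟩
  | @cons u x y p' h hwk ih =>
    rcases List.mem_cons.mp hw with rfl | hmem
    · exact ⟨[], p', rfl, Walk.cons h hwk⟩
    · obtain ⟨p1, p2, hp, hwalk⟩ := ih hmem
      exact ⟨u :: p1, p2, by rw [hp]; rfl, hwalk⟩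

/-- If `v` is an ancestor of `u` in the dominator tree (i.e. `v` dominates
`u`), then every simple path in `G` from `v` to `u` contains only vertices dominated
by `v`. -/
theorem stmt0 (E : V → V → Prop) (s v u : V)
    (hu : Reachable E s u) (hdom : Dom E s v u) :
    ∀ p, Walk E v u p → p.Nodup → ∀ w ∈ p, Dom E s v w := by
  intro p hp hnd w hw q hq
  obtain ⟨p1, p2, hps, hwu⟩ := walk_split hp hw
  have hsu : Walk E s u (q ++ p2) := walk_append hq hwu
  have hv : v ∈ q ++ p2 := hdom _ hsu
  obtain ⟨t, ht⟩ := walk_head' hp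
  have hvt : v ∉ t := by
    have := hnd
    rw [ht] at this
    exact (List.nodup_cons.mp this).1
  have hp2t : ∀ x ∈ p2, x ∈ t := by
    intro x hx
    rw [ht] at hps
    cases p1 with
    | nil =>
      simp only [List.nil_append, List.cons.injEq] at hps
      rw [hps.2]; exact hx
    | cons a p1' =>
      simp only [List.cons_append, List.cons.injEq] at hps
      rw [hps.2]
      exact List.mem_append_right _ (List.mem_cons_of_mem _ hx)
  rcases List.mem_append.mp hv with h | h
  · exact h
  · exact absurd (hp2t v h) hvt

end Dominators
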